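/- Let (M^n, g) be a smooth Lorentzian manifold with a continuously differentiable symmetric (0,2)-tensor field F satisfying F(p,p) ≥ 0 for all null vectors p (i.e., g(p,p) = 0). Then for each compact subset Z ⊂ M there exists a constant C_Z ∈ ℝ such that F(p,p) ≥ C_Z |g(p,p)| for all p ∈ T_z M with z ∈ Z. -/

import Mathlib

open scoped Manifold
open Metric Set Bundle Topology Filter

set_option maxHeartbeats 1000000

section key
variable {n : ℕ}
local notation "E" => EuclideanSpace ℝ (Fin n)

private lemma quad_smul' {V : Type*} [AddCommGroup V] [Module ℝ V]
    (B : V →ₗ[ℝ] V →ₗ[ℝ] ℝ) (t : ℝ) (w : V) :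
    B (t • w) (t • w) = t ^ 2 * B w w := by
  simp [map_smul, smul_eq_mul]; ring

private lemma quad_continuous (B : E →ₗ[ℝ] E →ₗ[ℝ] ℝ) : Continuous fun w : E => B w w := by
  let B' : E →ₗ[ℝ] (E →L[ℝ] ℝ) :=
    { toFun := fun w => LinearMap.toContinuousLinearMap (B w)
      map_add' := by intro x y; ext z; simp
      map_smul' := by intro c x; ext z; simp }
  have hB' : Continuous B' := B'.continuous_of_finiteDimensional
  have : Continuous fun w : E => (B' w) w := hB'.clm_apply continuous_id
  exact this

private lemma quad_smul (B : E →ₗ[ℝ] E →ₗ[ℝ] ℝ) (t : ℝ) (w : E) :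
    B (t • w) (t • w) = t ^ 2 * B w w := quad_smul' B t w

private lemma sInf_attained {K : Set E} (hK : IsCompact K) (hne : K.Nonempty)
    {q h : E → ℝ} (hq : Continuous q) (hh : Continuous h) (lam : ℝ) :
    ∃ w ∈ K, sInf ((fun w => q w - lam * h w) '' K) = q w - lam * h w :=
  hK.exists_sInf_image_eq hne ((hq.sub (continuous_const.mul hh)).continuousOn)

private lemma sInf_le_val {K : Set E} (hK : IsCompact K)
    {q h : E → ℝ} (hq : Continuous q) (hh : Continuous h) (lam : ℝ)
    {w : E} (hw : w ∈ K) :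
    sInf ((fun w => q w - lam * h w) '' K) ≤ q w - lam * h w :=
  csInf_le (hK.image_of_continuousOn
      ((hq.sub (continuous_const.mul hh)).continuousOn)).bddBelow
    (Set.mem_image_of_mem _ hw)

private lemma le_sInf_val {K : Set E} (hne : K.Nonempty)
    {q h : E → ℝ} (lam : ℝ) {a : ℝ} (ha : ∀ w ∈ K, a ≤ q w - lam * h w) :
    a ≤ sInf ((fun w => q w - lam * h w) '' K) := by
  apply le_csInf (hne.image _)
  rintro b ⟨w, hw, rfl⟩
  exact ha w hw

private lemma phi_continuous {K : Set E} (hK : IsCompact K) (hne : K.Nonempty)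
    {q h : E → ℝ} (hq : Continuous q) (hh : Continuous h)
    {Mh : ℝ} (hMh : ∀ w ∈ K, |h w| ≤ Mh) :
    Continuous (fun lam => sInf ((fun w => q w - lam * h w) '' K)) := by
  have hMh0 : 0 ≤ Mh := le_trans (abs_nonneg _) (hMh _ hne.choose_spec)
  have lip : ∀ a b : ℝ, sInf ((fun w => q w - a * h w) '' K)
      ≤ sInf ((fun w => q w - b * h w) '' K) + Mh * |a - b| := by
    intro a b
    obtain ⟨w, hwK, hwv⟩ := sInf_attained hK hne hq hh b
    calc sInf ((fun w => q w - a * h w) '' K) ≤ q w - a * h w :=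
          sInf_le_val hK hq hh a hwK
      _ = (q w - b * h w) + (b - a) * h w := by ring
      _ ≤ (q w - b * h w) + Mh * |a - b| := by
          have h1 : (b - a) * h w ≤ |b - a| * |h w| := by
            calc (b - a) * h w ≤ |(b - a) * h w| := le_abs_self _
              _ = |b - a| * |h w| := abs_mul _ _
          have h2 : |b - a| * |h w| ≤ |a - b| * Mh := by
            rw [abs_sub_comm b a]
            exact mul_le_mul_of_nonneg_left (hMh w hwK) (abs_nonneg _)
          linarith
      _ = sInf ((fun w => q w - b * h w) '' K) + Mh * |a - b| := by
          rw [hwv]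
  apply (LipschitzWith.of_dist_le_mul (K := Real.toNNReal Mh) ?_).continuous
  intro a b
  rw [Real.dist_eq, Real.dist_eq]
  have h1 := lip a b
  have h2 := lip b a
  have hco : (Real.toNNReal Mh : ℝ) = Mh := Real.coe_toNNReal _ hMh0
  rw [abs_le]
  constructor
  · rw [hco]
    rw [abs_sub_comm b a] at h2
    linarith
  · rw [hco]; linarith

/-- The key pointwise algebraic lemma: a quadratic form `B` which is nonnegative on the
null cone of an indefinite form `η` is bounded below by a multiple `lam • η` with an
explicit bound on `lam`. -/
private lemma keyLemma (B η : E →ₗ[ℝ] E →ₗ[ℝ] ℝ)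
    (hBsymm : ∀ v w, B v w = B w v) (hηsymm : ∀ v w, η v w = η w v)
    (S c : ℝ) (hS : 0 ≤ S) (hc : 0 < c)
    (hSb : ∀ w : E, ‖w‖ = 1 → |B w w| ≤ S)
    (u v : E) (hu : ‖u‖ = 1) (hv : ‖v‖ = 1)
    (hηu : c ≤ η u u) (hηv : η v v ≤ -c)
    (hnull : ∀ w : E, η w w = 0 → 0 ≤ B w w) :
    ∃ lam : ℝ, |lam| ≤ 2 * S / c ∧ ∀ w, lam * η w w ≤ B w w := by
  have hqc : Continuous fun w : E => B w w := quad_continuous B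
  have hhc : Continuous fun w : E => η w w := quad_continuous η
  set q : E → ℝ := fun w => B w w with hqdef
  set h : E → ℝ := fun w => η w w with hhdef
  set Kp : Set E := sphere (0:E) 1 ∩ {w | 0 ≤ h w} with hKpdef
  set Km : Set E := sphere (0:E) 1 ∩ {w | h w ≤ 0} with hKmdef
  have hKpc : IsCompact Kp :=
    (isCompact_sphere 0 1).inter_right (isClosed_le continuous_const hhc)
  have hKmc : IsCompact Km :=
    (isCompact_sphere 0 1).inter_right (isClosed_le hhc continuous_const)
  have hmemp : ∀ w : E, ‖w‖ = 1 → 0 ≤ h w → w ∈ Kp := fun w h1 h2 =>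
    ⟨mem_sphere_zero_iff_norm.2 h1, h2⟩
  have hmemm : ∀ w : E, ‖w‖ = 1 → h w ≤ 0 → w ∈ Km := fun w h1 h2 =>
    ⟨mem_sphere_zero_iff_norm.2 h1, h2⟩
  have hKpnorm : ∀ w ∈ Kp, ‖w‖ = 1 := fun w hw => mem_sphere_zero_iff_norm.1 hw.1
  have hKmnorm : ∀ w ∈ Km, ‖w‖ = 1 := fun w hw => mem_sphere_zero_iff_norm.1 hw.1
  have hup : u ∈ Kp := hmemp u hu (le_trans hc.le hηu)
  have hvm : v ∈ Km := hmemm v hv (le_trans hηv (by linarith))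
  have hnep : Kp.Nonempty := ⟨u, hup⟩
  have hnem : Km.Nonempty := ⟨v, hvm⟩
  obtain ⟨Mh, hMh⟩ := (isCompact_sphere (0:E) 1).exists_bound_of_continuousOn hhc.continuousOn
  have hMh' : ∀ w : E, ‖w‖ = 1 → |h w| ≤ Mh := fun w hw => by
    have := hMh w (mem_sphere_zero_iff_norm.2 hw)
    rwa [Real.norm_eq_abs] at this
  set φp : ℝ → ℝ := fun lam => sInf ((fun w => q w - lam * h w) '' Kp) with hφpdef
  set φm : ℝ → ℝ := fun lam => sInf ((fun w => q w - lam * h w) '' Km) with hφmdef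
  have hφpc : Continuous φp :=
    phi_continuous hKpc hnep hqc hhc (fun w hw => hMh' w (hKpnorm w hw))
  have hφmc : Continuous φm :=
    phi_continuous hKmc hnem hqc hhc (fun w hw => hMh' w (hKmnorm w hw))
  have hcc : 2 * S / c * c = 2 * S := div_mul_cancel₀ _ hc.ne'
  have hlam1nn : 0 ≤ 2 * S / c := by positivity
  have hup1 : φp (2 * S / c) ≤ -S := by
    have h1 : φp (2 * S / c) ≤ q u - 2 * S / c * h u := sInf_le_val hKpc hqc hhc _ hup
    have h2 : q u ≤ S := le_of_abs_le (hSb u hu)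
    have h3 : 2 * S / c * c ≤ 2 * S / c * h u := mul_le_mul_of_nonneg_left hηu hlam1nn
    linarith
  have hmm1 : -S ≤ φm (2 * S / c) := by
    apply le_sInf_val hnem
    intro w hw
    have h2 : -S ≤ q w := neg_le_of_abs_le (hSb w (hKmnorm w hw))
    have h3 : 2 * S / c * h w ≤ 0 := mul_nonpos_of_nonneg_of_nonpos hlam1nn hw.2
    linarith
  have hum0 : φm (-(2 * S / c)) ≤ -S := by
    have h1 : φm (-(2 * S / c)) ≤ q v - -(2 * S / c) * h v := sInf_le_val hKmc hqc hhc _ hvm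
    have h2 : q v ≤ S := le_of_abs_le (hSb v hv)
    have h3 : 2 * S / c * h v ≤ 2 * S / c * (-c) := mul_le_mul_of_nonneg_left hηv hlam1nn
    have h4 : 2 * S / c * (-c) = -(2*S) := by rw [mul_neg, hcc]
    linarith
  have hpm0 : -S ≤ φp (-(2 * S / c)) := by
    apply le_sInf_val hnep
    intro w hw
    have h2 : -S ≤ q w := neg_le_of_abs_le (hSb w (hKpnorm w hw))
    have h3 : 0 ≤ 2 * S / c * h w := mul_nonneg hlam1nn hw.2
    linarith
  have hivt : (0:ℝ) ∈ (fun lam => φp lam - φm lam) '' Icc (-(2 * S / c)) (2 * S / c) := by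
    apply intermediate_value_Icc' (by linarith) ((hφpc.sub hφmc).continuousOn)
    exact ⟨by simp only [Pi.sub_apply]; linarith, by simp only [Pi.sub_apply]; linarith⟩
  obtain ⟨lam, hlamIcc, hlameq⟩ := hivt
  have hlamabs : |lam| ≤ 2 * S / c := abs_le.2 ⟨by linarith [hlamIcc.1], hlamIcc.2⟩
  obtain ⟨wp, hwpK, hwpval⟩ := sInf_attained hKpc hnep hqc hhc lam
  obtain ⟨wm, hwmK, hwmval⟩ := sInf_attained hKmc hnem hqc hhc lam
  have hlameq' : φp lam - φm lam = 0 := hlameq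
  have hwpval' : q wp - lam * h wp = φp lam := hwpval.symm
  have hwmval' : q wm - lam * h wm = φp lam := by rw [hwmval.symm]; linarith
  have hmin : ∀ w : E, ‖w‖ = 1 → φp lam ≤ q w - lam * h w := by
    intro w hw
    rcases le_or_gt 0 (h w) with hcase | hcase
    · exact sInf_le_val hKpc hqc hhc lam (hmemp w hw hcase)
    · have := sInf_le_val hKmc hqc hhc lam (hmemm w hw hcase.le)
      linarith
  rcases le_or_gt 0 (φp lam) with hμ | hμ
  · -- nonnegative minimum: lam works
    refine ⟨lam, hlamabs, ?_⟩
    intro w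
    rcases eq_or_ne w 0 with rfl | hw0
    · simp [hqdef, hhdef]
    · have ht : ‖w‖ ≠ 0 := norm_ne_zero_iff.2 hw0
      have hnw1 : ‖(‖w‖⁻¹ • w)‖ = 1 := norm_smul_inv_norm hw0
      have h1 := hmin _ hnw1
      have hwe : ‖w‖ • (‖w‖⁻¹ • w) = w := smul_inv_smul₀ ht w
      have hBq : B w w = ‖w‖^2 * q (‖w‖⁻¹ • w) := by
        rw [← hwe, quad_smul, hwe]
      have hηq : η w w = ‖w‖^2 * h (‖w‖⁻¹ • w) := by
        rw [← hwe, quad_smul, hwe]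
      have h2 := mul_le_mul_of_nonneg_left h1 (sq_nonneg ‖w‖)
      have h3 : 0 ≤ ‖w‖^2 * φp lam := mul_nonneg (sq_nonneg _) hμ
      have h5 : ‖w‖^2 * (q (‖w‖⁻¹ • w) - lam * h (‖w‖⁻¹ • w))
          = B w w - lam * η w w := by rw [hBq, hηq]; ring
      have h6 : B w w - lam * η w w = (B w) w - lam * (η w) w := rfl
      linarith [h2, h3, h5, h6]
  · -- negative minimum: contradiction
    exfalso
    set Q : E → E → ℝ := fun x y => B x y - lam * η x y - φp lam * (inner ℝ x y : ℝ)
      with hQdef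
    have hinner1 : ∀ x : E, ‖x‖ = 1 → (inner ℝ x x : ℝ) = 1 := by
      intro x hx
      rw [real_inner_self_eq_norm_mul_norm, hx]; norm_num
    have hQsmul : ∀ (t : ℝ) (y : E), Q (t • y) (t • y) = t^2 * Q y y := by
      intro t y
      simp only [hQdef, map_smul, smul_eq_mul, LinearMap.smul_apply,
        real_inner_smul_left, real_inner_smul_right]
      ring
    have hQpos : ∀ x : E, 0 ≤ Q x x := by
      intro x
      rcases eq_or_ne x 0 with rfl | hx0
      · simp [hQdef]
      · have ht : ‖x‖ ≠ 0 := norm_ne_zero_iff.2 hx0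
        have hnx1 : ‖(‖x‖⁻¹ • x)‖ = 1 := norm_smul_inv_norm hx0
        have hwe : ‖x‖ • (‖x‖⁻¹ • x) = x := smul_inv_smul₀ ht x
        have h1 := hmin _ hnx1
        have h2 : Q (‖x‖⁻¹ • x) (‖x‖⁻¹ • x) = q (‖x‖⁻¹ • x) - lam * h (‖x‖⁻¹ • x) - φp lam := by
          simp only [hQdef, hinner1 _ hnx1, hqdef, hhdef, mul_one]
        have h3 : 0 ≤ Q (‖x‖⁻¹ • x) (‖x‖⁻¹ • x) := by rw [h2]; linarith
        have h4 : Q x x = ‖x‖^2 * Q (‖x‖⁻¹ • x) (‖x‖⁻¹ • x) := by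
          rw [← hwe, hQsmul, hwe]
        rw [h4]
        exact mul_nonneg (sq_nonneg _) h3
    have hQker : ∀ x, Q x x = 0 → ∀ y, Q x y = 0 := by
      intro x hx y
      have hd : ∀ t : ℝ, 0 ≤ Q y y * (t*t) + (2 * Q x y) * t + Q x x := by
        intro t
        have h0 := hQpos (x + t • y)
        have hexp : Q (x + t • y) (x + t • y)
            = Q y y * (t*t) + (2 * Q x y) * t + Q x x := by
          simp only [hQdef, map_add, map_smul, smul_eq_mul, LinearMap.add_apply,
            LinearMap.smul_apply, inner_add_left, inner_add_right,
            real_inner_smul_left, real_inner_smul_right, hBsymm y x, hηsymm y x,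
            real_inner_comm y x]
          ring
        linarith
      have hdisc := discrim_le_zero hd
      rw [discrim] at hdisc
      rw [hx] at hdisc
      have h9 : (2 * Q x y)^2 ≤ 0 := by linarith [hdisc]
      have h10 : (2 * Q x y) = 0 := by
        have := sq_eq_zero_iff.1 (le_antisymm h9 (sq_nonneg _))
        exact this
      linarith
    have hQwp : Q wp wp = 0 := by
      have := hinner1 wp (hKpnorm wp hwpK)
      simp only [hQdef, this, mul_one]
      have : B wp wp = q wp := rfl
      rw [this]
      have : η wp wp = h wp := rfl
      rw [this]
      linarith
    have hQwm : Q wm wm = 0 := by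
      have := hinner1 wm (hKmnorm wm hwmK)
      simp only [hQdef, this, mul_one]
      have : B wm wm = q wm := rfl
      rw [this]
      have : η wm wm = h wm := rfl
      rw [this]
      linarith
    have hcontra : ∀ x : E, x ≠ 0 → h x = 0 → Q x x = 0 → False := by
      intro x hx0 hxnull hxQ
      have h1 : 0 ≤ B x x := hnull x hxnull
      have h2 : (inner ℝ x x : ℝ) = ‖x‖ * ‖x‖ := real_inner_self_eq_norm_mul_norm x
      have h3 : 0 < ‖x‖ := norm_pos_iff.2 hx0
      have h4 : η x x = 0 := hxnull
      simp only [hQdef, h2, h4, mul_zero, sub_zero] at hxQ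
      have h5 : φp lam * (‖x‖*‖x‖) < 0 := mul_neg_of_neg_of_pos hμ (mul_pos h3 h3)
      linarith
    have hwp2 : (0:ℝ) ≤ h wp := hwpK.2
    have hwm2 : h wm ≤ 0 := hwmK.2
    rcases eq_or_lt_of_le hwp2 with hp0 | hppos
    · have hwpne : wp ≠ 0 := by
        intro h0
        have h00 := hKpnorm wp hwpK
        rw [h0, norm_zero] at h00
        exact zero_ne_one h00
      exact hcontra wp hwpne hp0.symm hQwp
    rcases eq_or_lt_of_le hwm2 with hm0 | hmneg
    · have hwmne : wm ≠ 0 := by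
        intro h0
        have h00 := hKmnorm wm hwmK
        rw [h0, norm_zero] at h00
        exact zero_ne_one h00
      exact hcontra wm hwmne hm0 hQwm
    have hfc : Continuous fun θ : ℝ => h (Real.cos θ • wp + Real.sin θ • wm) :=
      hhc.comp ((Real.continuous_cos.smul continuous_const).add
        (Real.continuous_sin.smul continuous_const))
    have hivt2 : (0:ℝ) ∈ (fun θ : ℝ => h (Real.cos θ • wp + Real.sin θ • wm))
        '' Icc 0 (Real.pi/2) := by
      apply intermediate_value_Icc' (by positivity) hfc.continuousOn
      constructor
      · simpa using hmneg.le
      · simpa using hppos.le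
    obtain ⟨θ, hθI, hθv⟩ := hivt2
    have hxnull : h (Real.cos θ • wp + Real.sin θ • wm) = 0 := hθv
    have hxne : Real.cos θ • wp + Real.sin θ • wm ≠ 0 := by
      intro h0
      by_cases hcos : Real.cos θ = 0
      · have hsin : Real.sin θ ≠ 0 := by
          intro hs
          have := Real.sin_sq_add_cos_sq θ
          rw [hs, hcos] at this; norm_num at this
        rw [hcos, zero_smul, zero_add] at h0
        rcases smul_eq_zero.1 h0 with h | h
        · exact hsin h
        · have h00 := hKmnorm wm hwmK
          rw [h, norm_zero] at h00
          exact zero_ne_one h00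
      · have he : Real.cos θ • wp = -(Real.sin θ • wm) := add_eq_zero_iff_eq_neg.1 h0
        have hq1 : η (Real.cos θ • wp) (Real.cos θ • wp)
            = η (Real.sin θ • wm) (Real.sin θ • wm) := by
          rw [he]; simp [map_neg, LinearMap.neg_apply]
        rw [quad_smul, quad_smul] at hq1
        have hcos2 : 0 < (Real.cos θ)^2 := by positivity
        have h5 : 0 < (Real.cos θ)^2 * h wp := mul_pos hcos2 hppos
        have h6 : (Real.sin θ)^2 * h wm ≤ 0 :=
          mul_nonpos_of_nonneg_of_nonpos (sq_nonneg _) hmneg.le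
        have h7 : (Real.cos θ)^2 * h wp = (Real.sin θ)^2 * h wm := hq1
        linarith
    have hQx : Q (Real.cos θ • wp + Real.sin θ • wm) (Real.cos θ • wp + Real.sin θ • wm) = 0 := by
      have hQpm : Q wp wm = 0 := hQker wp hQwp wm
      have hexp : Q (Real.cos θ • wp + Real.sin θ • wm) (Real.cos θ • wp + Real.sin θ • wm)
          = (Real.cos θ)^2 * Q wp wp + 2*(Real.cos θ)*(Real.sin θ)*(Q wp wm)
            + (Real.sin θ)^2 * Q wm wm := by
        simp only [hQdef, map_add, map_smul, smul_eq_mul, LinearMap.add_apply,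
          LinearMap.smul_apply, inner_add_left, inner_add_right,
          real_inner_smul_left, real_inner_smul_right, hBsymm wm wp, hηsymm wm wp,
          real_inner_comm wm wp]
        ring
      rw [hexp, hQwp, hQwm, hQpm]; ring
    exact hcontra _ hxne hxnull hQx

/-- Uniformization of pointwise strict positivity over a compact set via a finite subcover. -/
private lemma coverLemma {M : Type*} [TopologicalSpace M] {N U : Set M}
    (hNcomp : IsCompact N) (hNsub : N ⊆ U) (hU : IsOpen U)
    (f : M × E → ℝ)
    (hf : ContinuousOn f (U ×ˢ Set.univ))
    (hex : ∀ z ∈ N, ∃ w : E, ‖w‖ = 1 ∧ 0 < f (z, w)) :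
    ∃ c : ℝ, 0 < c ∧ ∀ z ∈ N, ∃ w : E, ‖w‖ = 1 ∧ c ≤ f (z, w) := by
  have key : ∀ x : M, x ∈ N → ∃ (V : Set M) (d : ℝ), V ∈ 𝓝 x ∧ 0 < d ∧
      ∀ z ∈ V, ∃ w : E, ‖w‖ = 1 ∧ d ≤ f (z, w) := by
    intro x hx
    obtain ⟨w, hw1, hwpos⟩ := hex x hx
    have hslice : ContinuousOn (fun z => f (z, w)) U := by
      apply hf.comp (Continuous.continuousOn (by continuity)) ?_
      intro z hz
      exact ⟨hz, Set.mem_univ _⟩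
    have hcwa : ContinuousWithinAt (fun z => f (z, w)) U x := hslice x (hNsub hx)
    have hev : ∀ᶠ z in 𝓝[U] x, f (x, w)/2 < f (z, w) :=
      hcwa.eventually (eventually_gt_nhds (by linarith))
    rw [hU.nhdsWithin_eq (hNsub hx)] at hev
    exact ⟨{z | f (x,w)/2 < f (z,w)}, f (x,w)/2, hev, by linarith,
      fun z hz => ⟨w, hw1, le_of_lt hz⟩⟩
  choose! V d hV hd hVd using key
  obtain ⟨t, htN, htcov⟩ := hNcomp.elim_nhds_subcover V (fun x hx => hV x hx)
  rcases t.eq_empty_or_nonempty with rfl | htne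
  · exact ⟨1, one_pos, fun z hz => absurd (htcov hz) (by simp)⟩
  · refine ⟨t.inf' htne d, ?_, ?_⟩
    · rw [Finset.lt_inf'_iff]
      exact fun x hxt => hd x (htN x hxt)
    · intro z hz
      have hmem := htcov hz
      simp only [Set.mem_iUnion] at hmem
      obtain ⟨x, hxt, hzV⟩ := hmem
      obtain ⟨w, hw1, hwd⟩ := hVd x (htN x hxt) z hzV
      exact ⟨w, hw1, le_trans (Finset.inf'_le _ hxt) hwd⟩

end key

/-- on a smooth Lorentzian manifold, if a C¹ symmetric (0,2)-tensor
field F is nonnegative on null vectors, then on each compact set Z there is a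
constant C_Z with F(p,p) ≥ C_Z |g(p,p)| for all tangent vectors p over Z. -/
theorem stmt17 {n : ℕ} (hn : 1 ≤ n)
    {M : Type*} [TopologicalSpace M] [ChartedSpace (EuclideanSpace ℝ (Fin n)) M]
    [IsManifold (𝓡 n) (⊤ : ℕ∞) M]
    (g F : ∀ z : M, TangentSpace (𝓡 n) z →ₗ[ℝ] TangentSpace (𝓡 n) z →ₗ[ℝ] ℝ)
    (hgsymm : ∀ z v w, g z v w = g z w v)
    (hFsymm : ∀ z v w, F z v w = F z w v)
    -- g is smooth, and Lorentzian of signature (+,-,…,-):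
    (hgsmooth : ContMDiff ((𝓡 n).tangent) 𝓘(ℝ) (⊤ : ℕ∞)
      (fun v : TangentBundle (𝓡 n) M => g v.proj v.2 v.2))
    (hlorentz : ∀ z : M, ∃ e : Module.Basis (Fin n) ℝ (TangentSpace (𝓡 n) z),
      ∀ i j, g z (e i) (e j) =
        if i = j then (if (i : ℕ) = 0 then 1 else -1) else 0)
    -- F is continuously differentiable:
    (hFC1 : ContMDiff ((𝓡 n).tangent) 𝓘(ℝ) 1
      (fun v : TangentBundle (𝓡 n) M => F v.proj v.2 v.2))
    -- F is nonnegative on null vectors: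
    (hnull : ∀ (z : M) (p : TangentSpace (𝓡 n) z), g z p p = 0 → 0 ≤ F z p p)
    (Z : Set M) (hZ : IsCompact Z) :
    ∃ C : ℝ, ∀ z ∈ Z, ∀ p : TangentSpace (𝓡 n) z, C * |g z p p| ≤ F z p p := by
  classical
  have hψ : Continuous fun v : TangentBundle (𝓡 n) M => g v.proj v.2 v.2 := hgsmooth.continuous
  have hφ : Continuous fun v : TangentBundle (𝓡 n) M => F v.proj v.2 v.2 := hFC1.continuous
  have locByPoint : ∀ z₀ : M, ∃ N ∈ 𝓝 z₀, ∃ C : ℝ, ∀ z ∈ N, ∀ p : TangentSpace (𝓡 n) z,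
      C * |g z p p| ≤ F z p p := by
    intro z₀
    haveI : LocallyCompactSpace M := Manifold.locallyCompact_of_finiteDimensional (𝓡 n)
    set e := trivializationAt (EuclideanSpace ℝ (Fin n)) (TangentSpace (𝓡 n)) z₀ with hedef
    have hz₀ : z₀ ∈ e.baseSet := FiberBundle.mem_baseSet_trivializationAt _ _ _
    obtain ⟨N, hNnhds, hNsub, hNcomp⟩ := local_compact_nhds (e.open_baseSet.mem_nhds hz₀)
    have hG : ContinuousOn (fun q : M × EuclideanSpace ℝ (Fin n) =>
        g q.1 (e.symm q.1 q.2) (e.symm q.1 q.2)) (e.baseSet ×ˢ Set.univ) :=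
      hψ.comp_continuousOn e.continuousOn_symm
    have hΦc : ContinuousOn (fun q : M × EuclideanSpace ℝ (Fin n) =>
        F q.1 (e.symm q.1 q.2) (e.symm q.1 q.2)) (e.baseSet ×ˢ Set.univ) :=
      hφ.comp_continuousOn e.continuousOn_symm
    have hKc : IsCompact (N ×ˢ (sphere (0 : EuclideanSpace ℝ (Fin n)) 1)) :=
      hNcomp.prod (isCompact_sphere 0 1)
    have hKsub : (N ×ˢ (sphere (0 : EuclideanSpace ℝ (Fin n)) 1)) ⊆ e.baseSet ×ˢ Set.univ :=
      Set.prod_mono hNsub (Set.subset_univ _)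
    obtain ⟨S₀, hS₀⟩ := hKc.exists_bound_of_continuousOn (hΦc.mono hKsub)
    have hS : (0:ℝ) ≤ max S₀ 0 := le_max_right _ _
    have hSb : ∀ z : M, z ∈ N → ∀ w : EuclideanSpace ℝ (Fin n), ‖w‖ = 1 →
        |F z (e.symm z w) (e.symm z w)| ≤ max S₀ 0 := by
      intro z hz w hw
      refine le_trans ?_ (le_max_left _ _)
      have := hS₀ (z, w) ⟨hz, mem_sphere_zero_iff_norm.2 hw⟩
      rwa [Real.norm_eq_abs] at this
    -- positive-direction witnesses
    have hexpos : ∀ z ∈ N, ∃ w : EuclideanSpace ℝ (Fin n), ‖w‖ = 1 ∧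
        0 < g z (e.symm z w) (e.symm z w) := by
      intro z hz
      obtain ⟨b, hb⟩ := hlorentz z
      have hb00 : g z (b ⟨0, hn⟩) (b ⟨0, hn⟩) = 1 := by
        have := hb ⟨0, hn⟩ ⟨0, hn⟩
        simpa using this
      have hbne : b ⟨0, hn⟩ ≠ 0 := by
        intro h0
        rw [h0] at hb00
        simp at hb00
      have hzU : z ∈ e.baseSet := hNsub hz
      set w0 := e.continuousLinearEquivAt ℝ z hzU (b ⟨0, hn⟩) with hw0def
      have hw0ne : w0 ≠ 0 := fun h0 =>
        hbne ((e.continuousLinearEquivAt ℝ z hzU).map_eq_zero_iff.1 h0)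
      refine ⟨‖w0‖⁻¹ • w0, norm_smul_inv_norm hw0ne, ?_⟩
      have hsymmlin : e.symm z (‖w0‖⁻¹ • w0) = ‖w0‖⁻¹ • (b ⟨0, hn⟩) := by
        have h1 : e.symm z (‖w0‖⁻¹ • w0)
            = (e.continuousLinearEquivAt ℝ z hzU).symm (‖w0‖⁻¹ • w0) := rfl
        rw [h1, map_smul]
        congr 1
        exact (e.continuousLinearEquivAt ℝ z hzU).symm_apply_apply _
      rw [hsymmlin, quad_smul', hb00, mul_one]
      exact pow_pos (inv_pos.2 (norm_pos_iff.2 hw0ne)) 2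
    obtain ⟨cp, hcp, hwitp⟩ := coverLemma hNcomp hNsub e.open_baseSet _ hG hexpos
    -- uniform lam-bound over N
    obtain ⟨Lam, hLam0, main⟩ : ∃ Lam : ℝ, 0 ≤ Lam ∧ ∀ z ∈ N, ∃ lam : ℝ, |lam| ≤ Lam ∧
        ∀ p : TangentSpace (𝓡 n) z, lam * g z p p ≤ F z p p := by
      rcases Nat.lt_or_ge 1 n with h2n | h1n
      · -- the case n ≥ 2 : use the key algebraic lemma
        have hexneg : ∀ z ∈ N, ∃ w : EuclideanSpace ℝ (Fin n), ‖w‖ = 1 ∧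
            0 < -(g z (e.symm z w) (e.symm z w)) := by
          intro z hz
          obtain ⟨b, hb⟩ := hlorentz z
          have hb11 : g z (b ⟨1, h2n⟩) (b ⟨1, h2n⟩) = -1 := by
            have := hb ⟨1, h2n⟩ ⟨1, h2n⟩
            simpa using this
          have hbne : b ⟨1, h2n⟩ ≠ 0 := by
            intro h0
            rw [h0] at hb11
            simp at hb11
          have hzU : z ∈ e.baseSet := hNsub hz
          set w0 := e.continuousLinearEquivAt ℝ z hzU (b ⟨1, h2n⟩) with hw0def
          have hw0ne : w0 ≠ 0 := fun h0 =>
            hbne ((e.continuousLinearEquivAt ℝ z hzU).map_eq_zero_iff.1 h0)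
          refine ⟨‖w0‖⁻¹ • w0, norm_smul_inv_norm hw0ne, ?_⟩
          have hsymmlin : e.symm z (‖w0‖⁻¹ • w0) = ‖w0‖⁻¹ • (b ⟨1, h2n⟩) := by
            have h1 : e.symm z (‖w0‖⁻¹ • w0)
                = (e.continuousLinearEquivAt ℝ z hzU).symm (‖w0‖⁻¹ • w0) := rfl
            rw [h1, map_smul]
            congr 1
            exact (e.continuousLinearEquivAt ℝ z hzU).symm_apply_apply _
          rw [hsymmlin, quad_smul', hb11]
          have : (0:ℝ) < (‖w0‖⁻¹)^2 := pow_pos (inv_pos.2 (norm_pos_iff.2 hw0ne)) 2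
          linarith
        obtain ⟨cm, hcm, hwitm⟩ := coverLemma hNcomp hNsub e.open_baseSet _ hG.neg hexneg
        have hc : 0 < min cp cm := lt_min hcp hcm
        refine ⟨2 * (max S₀ 0) / min cp cm, div_nonneg (by positivity) hc.le, ?_⟩
        intro z hz
        have hzU : z ∈ e.baseSet := hNsub hz
        set L := e.continuousLinearEquivAt ℝ z hzU with hLdef
        set σ : EuclideanSpace ℝ (Fin n) →ₗ[ℝ] TangentSpace (𝓡 n) z :=
          L.symm.toLinearEquiv.toLinearMap with hσdef
        have hσval : ∀ w : EuclideanSpace ℝ (Fin n), σ w = e.symm z w := by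
          intro w; rfl
        obtain ⟨u, hu1, huc'⟩ := hwitp z hz
        obtain ⟨v, hv1, hvc'⟩ := hwitm z hz
        have huc : cp ≤ g z (e.symm z u) (e.symm z u) := huc'
        have hvc : cm ≤ -(g z (e.symm z v) (e.symm z v)) := hvc'
        obtain ⟨lam, hlamabs, hlam⟩ := keyLemma ((F z).compl₁₂ σ σ) ((g z).compl₁₂ σ σ)
          (fun x y => by simp only [LinearMap.compl₁₂_apply]; exact hFsymm z _ _)
          (fun x y => by simp only [LinearMap.compl₁₂_apply]; exact hgsymm z _ _)
          (max S₀ 0) (min cp cm) hS hc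
          (fun w hw => by
            simp only [LinearMap.compl₁₂_apply, hσval]
            exact hSb z hz w hw)
          u v hu1 hv1
          (by
            simp only [LinearMap.compl₁₂_apply, hσval]
            exact le_trans (min_le_left _ _) huc)
          (by
            simp only [LinearMap.compl₁₂_apply, hσval]
            have h99 := le_trans (min_le_right cp cm) hvc
            linarith)
          (fun w hw => by
            simp only [LinearMap.compl₁₂_apply, hσval] at hw ⊢
            exact hnull z _ hw)
        refine ⟨lam, hlamabs, ?_⟩
        intro p
        have := hlam (L p)
        simp only [LinearMap.compl₁₂_apply, hσval] at this
        have hLp : e.symm z (L p) = p := by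
          have h1 : e.symm z (L p) = L.symm (L p) := rfl
          rw [h1]
          exact L.symm_apply_apply p
        rwa [hLp] at this
      · -- the case n = 1 : g is positive definite
        have hn1 : n = 1 := le_antisymm h1n hn
        subst hn1
        have hpos : ∀ q ∈ N ×ˢ (sphere (0 : EuclideanSpace ℝ (Fin 1)) 1),
            0 < g q.1 (e.symm q.1 q.2) (e.symm q.1 q.2) := by
          rintro ⟨z, w⟩ ⟨hz, hw⟩
          have hzU : z ∈ e.baseSet := hNsub hz
          have hw1 : ‖w‖ = 1 := mem_sphere_zero_iff_norm.1 hw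
          have hwne : w ≠ 0 := by
            intro h0; rw [h0, norm_zero] at hw1; exact zero_ne_one hw1
          have hpne : e.symm z w ≠ 0 := by
            intro h0
            exact hwne ((e.continuousLinearEquivAt ℝ z hzU).symm.map_eq_zero_iff.1 h0)
          obtain ⟨b, hb⟩ := hlorentz z
          have hb00 : g z (b 0) (b 0) = 1 := by
            have := hb 0 0
            simpa using this
          have hrepr : (b.repr (e.symm z w) 0) • b 0 = e.symm z w := by
            have := b.sum_repr (e.symm z w)
            simpa [Fin.sum_univ_one] using this
          have hrne : b.repr (e.symm z w) 0 ≠ 0 := by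
            intro h0
            apply hpne
            rw [← hrepr, h0, zero_smul]
          have hkey : g z (e.symm z w) (e.symm z w)
              = (b.repr (e.symm z w) 0)^2 * g z (b 0) (b 0) := by
            conv_lhs => rw [← hrepr]
            rw [quad_smul']
          rw [hkey, hb00, mul_one]
          exact sq_abs (b.repr (e.symm z w) 0) ▸ pow_pos (abs_pos.2 hrne) 2
        -- minimum of G over the compact product
        have hKne : (N ×ˢ (sphere (0 : EuclideanSpace ℝ (Fin 1)) 1)).Nonempty := by
          refine ⟨(z₀, EuclideanSpace.single 0 (1:ℝ)), mem_of_mem_nhds hNnhds, ?_⟩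
          rw [mem_sphere_zero_iff_norm, EuclideanSpace.norm_single, norm_one]
        obtain ⟨q0, hq0K, hq0min'⟩ := hKc.exists_isMinOn hKne (hG.mono hKsub)
        have hq0min := isMinOn_iff.1 hq0min'
        have hc1 : 0 < g q0.1 (e.symm q0.1 q0.2) (e.symm q0.1 q0.2) := hpos q0 hq0K
        set c1 := g q0.1 (e.symm q0.1 q0.2) (e.symm q0.1 q0.2) with hc1def
        refine ⟨max S₀ 0 / c1, div_nonneg hS hc1.le, ?_⟩
        intro z hz
        have hzU : z ∈ e.baseSet := hNsub hz
        refine ⟨-(max S₀ 0 / c1), by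
          rw [abs_neg, abs_of_nonneg (div_nonneg hS hc1.le)], ?_⟩
        intro p
        rcases eq_or_ne p 0 with rfl | hpne
        · simp
        · set L := e.continuousLinearEquivAt ℝ z hzU with hLdef
          set w := L p with hwdef
          have hwne : w ≠ 0 := fun h0 => hpne (L.map_eq_zero_iff.1 h0)
          have ht : ‖w‖ ≠ 0 := norm_ne_zero_iff.2 hwne
          have hw1 : ‖(‖w‖⁻¹ • w)‖ = 1 := norm_smul_inv_norm hwne
          have hσ : e.symm z (‖w‖⁻¹ • w) = ‖w‖⁻¹ • p := by
            have h1 : e.symm z (‖w‖⁻¹ • w)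
                = (e.continuousLinearEquivAt ℝ z hzU).symm (‖w‖⁻¹ • w) := rfl
            rw [h1, map_smul]
            congr 1
            exact L.symm_apply_apply p
          have hKmem : (z, ‖w‖⁻¹ • w) ∈ N ×ˢ (sphere (0 : EuclideanSpace ℝ (Fin 1)) 1) :=
            ⟨hz, mem_sphere_zero_iff_norm.2 hw1⟩
          have hGe : c1 ≤ g z (e.symm z (‖w‖⁻¹ • w)) (e.symm z (‖w‖⁻¹ • w)) :=
            hq0min _ hKmem
          have hΦe : |F z (e.symm z (‖w‖⁻¹ • w)) (e.symm z (‖w‖⁻¹ • w))| ≤ max S₀ 0 :=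
            hSb z hz _ hw1
          -- the unit-level inequality
          have hunit : -(max S₀ 0 / c1) * (g z (e.symm z (‖w‖⁻¹ • w)) (e.symm z (‖w‖⁻¹ • w)))
              ≤ F z (e.symm z (‖w‖⁻¹ • w)) (e.symm z (‖w‖⁻¹ • w)) := by
            have h1 : -(max S₀ 0 / c1) ≤ 0 := neg_nonpos.2 (div_nonneg hS hc1.le)
            have h2 : -(max S₀ 0 / c1) * (g z (e.symm z (‖w‖⁻¹ • w)) (e.symm z (‖w‖⁻¹ • w)))
                ≤ -(max S₀ 0 / c1) * c1 := by
              apply mul_le_mul_of_nonpos_left hGe h1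
            have h3 : -(max S₀ 0 / c1) * c1 = -(max S₀ 0) := by
              rw [neg_mul, div_mul_cancel₀ _ hc1.ne']
            have h4 : -(max S₀ 0) ≤ F z (e.symm z (‖w‖⁻¹ • w)) (e.symm z (‖w‖⁻¹ • w)) := by
              have := neg_abs_le (F z (e.symm z (‖w‖⁻¹ • w)) (e.symm z (‖w‖⁻¹ • w)))
              linarith [hΦe]
            linarith
          rw [hσ] at hunit
          rw [quad_smul', quad_smul'] at hunit
          have h6 : ‖w‖^2 * (‖w‖⁻¹)^2 = 1 := by
            field_simp
          have h7 := mul_le_mul_of_nonneg_left hunit (sq_nonneg ‖w‖)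
          have e1 : ‖w‖^2 * (-(max S₀ 0 / c1) * ((‖w‖⁻¹)^2 * g z p p))
              = -(max S₀ 0 / c1) * g z p p * (‖w‖^2 * (‖w‖⁻¹)^2) := by ring
          have e2 : ‖w‖^2 * ((‖w‖⁻¹)^2 * F z p p)
              = F z p p * (‖w‖^2 * (‖w‖⁻¹)^2) := by ring
          rw [e1, e2, h6, mul_one, mul_one] at h7
          exact h7
    refine ⟨N, hNnhds, -Lam, ?_⟩
    intro z hz p
    obtain ⟨lam, habs, hlam⟩ := main z hz
    have h2 : |lam * g z p p| ≤ Lam * |g z p p| := by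
      rw [abs_mul]
      exact mul_le_mul_of_nonneg_right habs (abs_nonneg _)
    have h3 := neg_abs_le (lam * g z p p)
    have h1 : -Lam * |g z p p| ≤ lam * g z p p := by
      have : -Lam * |g z p p| = -(Lam * |g z p p|) := by ring
      rw [this]
      linarith
    exact le_trans h1 (hlam p)
  choose N hN C hC using locByPoint
  obtain ⟨t, htZ, htcov⟩ := hZ.elim_nhds_subcover N (fun x _ => hN x)
  rcases t.eq_empty_or_nonempty with rfl | htne
  · exact ⟨0, fun z hz => absurd (htcov hz) (by simp)⟩
  · refine ⟨t.inf' htne C, ?_⟩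
    intro z hz p
    have hmem := htcov hz
    simp only [Set.mem_iUnion] at hmem
    obtain ⟨x, hxt, hzx⟩ := hmem
    calc t.inf' htne C * |g z p p| ≤ C x * |g z p p| :=
          mul_le_mul_of_nonneg_right (Finset.inf'_le _ hxt) (abs_nonneg _)
      _ ≤ F z p p := hC x z hzx p
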